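/- Let σ be an umbrella-free ordering of a finite simple graph G = (V, E), let (P_1, …, P_p) be the partition classes given by the recursive partition-class construction, and let <_P be the strict relation defined by x <_P y iff x ≺_σ y and xy ∉ E. Then for every vertex v and every i with 1 ≤ i ≤ p, v ∈ P_i if and only if the maximum length k of a chain v <_P x_1 <_P x_2 <_P … <_P x_k starting at v equals i − 1 (in particular, the index of the class containing v is one more than the length of a longest chain above v in the partial order <_P). -/

import Mathlib

/-- `σ` is an umbrella-free (cocomparability) ordering of `G`. -/
def UmbrellaFree {V : Type*} {n : ℕ} (G : SimpleGraph V) (σ : Fin n ≃ V) : Prop :=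
  ∀ i j k : Fin n, i < j → j < k → G.Adj (σ i) (σ k) →
    G.Adj (σ i) (σ j) ∨ G.Adj (σ j) (σ k)

/-- `#*(v)`: the number of non-neighbours of `v` occurring after `v` in `σ`. -/
def hashStar {V : Type*} [Fintype V] {n : ℕ} (G : SimpleGraph V) [DecidableRel G.Adj]
    (σ : Fin n ≃ V) (v : V) : ℕ :=
  (Finset.univ.filter (fun w => ¬ G.Adj v w ∧ σ.symm v < σ.symm w)).card

/-- The label `#_i(v) = #*(v) + |{z ∈ V \ U_i : vz ∈ E}|`, where `U` is the set of
still-unvisited vertices at step `i`. -/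
def hashAt {V : Type*} [Fintype V] [DecidableEq V] {n : ℕ} (G : SimpleGraph V)
    [DecidableRel G.Adj] (σ : Fin n ≃ V) (U : Finset V) (v : V) : ℕ :=
  hashStar G σ v + (Finset.univ.filter (fun z => z ∉ U ∧ G.Adj v z)).card

/-- The partition class extracted from the unvisited set `U`: the vertices of `U`
whose `#` label is minimum over `U`. -/
def Pclass {V : Type*} [Fintype V] [DecidableEq V] {n : ℕ} (G : SimpleGraph V)
    [DecidableRel G.Adj] (σ : Fin n ≃ V) (U : Finset V) : Finset V :=
  U.filter (fun v => ∀ u ∈ U, hashAt G σ U v ≤ hashAt G σ U u)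

/-- `Uset G σ i` is the set `U_{i+1}` of vertices still unvisited after the first
`i` partition classes have been removed (0-indexed, so `Uset G σ 0 = U_1 = V`,
and `P_{i+1} = Pclass G σ (Uset G σ i)`). -/
def Uset {V : Type*} [Fintype V] [DecidableEq V] {n : ℕ} (G : SimpleGraph V)
    [DecidableRel G.Adj] (σ : Fin n ≃ V) : ℕ → Finset V
  | 0 => Finset.univ
  | i + 1 => Uset G σ i \ Pclass G σ (Uset G σ i)

/-- The strict order `<_P` on vertices: `x <_P y` iff `x` precedes `y` in `σ` and
`xy` is a non-edge of `G` (the corresponding poset of the complement). -/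
def ltP {V : Type*} {n : ℕ} (G : SimpleGraph V) (σ : Fin n ≃ V) (x y : V) : Prop :=
  σ.symm x < σ.symm y ∧ ¬ G.Adj x y

section Aux

variable {V : Type*} [Fintype V] [DecidableEq V] (G : SimpleGraph V) [DecidableRel G.Adj]
  {n : ℕ} (σ : Fin n ≃ V)

instance ltP.decRel : DecidableRel (ltP G σ) := fun x y => by
  unfold ltP; infer_instance

/-- Fuel-based height: longest `ltP`-chain starting at `v`, with fuel `k`. -/
def hF : ℕ → V → ℕ
  | 0, _ => 0
  | k + 1, v => (Finset.univ.filter (fun w => ltP G σ v w)).sup (fun w => hF k w + 1)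

lemma hF_zero (v : V) : hF G σ 0 v = 0 := rfl

lemma hF_succ (k : ℕ) (v : V) :
    hF G σ (k + 1) v =
      (Finset.univ.filter (fun w => ltP G σ v w)).sup (fun w => hF G σ k w + 1) := rfl

lemma hF_bound : ∀ (k : ℕ) (v : V), hF G σ k v + ((σ.symm v : Fin n) : ℕ) < n := by
  intro k
  induction k with
  | zero => intro v; simpa [hF_zero] using (σ.symm v).isLt
  | succ k ih =>
    intro v
    have hv : ((σ.symm v : Fin n) : ℕ) < n := (σ.symm v).isLt
    have hsup : (Finset.univ.filter (fun w => ltP G σ v w)).sup (fun w => hF G σ k w + 1)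
        < n - ((σ.symm v : Fin n) : ℕ) := by
      rw [Finset.sup_lt_iff (by simp only [bot_eq_zero]; omega :
        (⊥ : ℕ) < n - ((σ.symm v : Fin n) : ℕ))]
      intro w hw
      have hlt : σ.symm v < σ.symm w := (Finset.mem_filter.mp hw).2.1
      rw [Fin.lt_def] at hlt
      have := ih w
      omega
    rw [hF_succ]
    omega

lemma hF_stab : ∀ (d : ℕ) (v : V) (k : ℕ), n - ((σ.symm v : Fin n) : ℕ) ≤ d →
    n ≤ k + 1 + ((σ.symm v : Fin n) : ℕ) → hF G σ (k + 1) v = hF G σ k v := by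
  intro d
  induction d with
  | zero => intro v k h1 _; have := (σ.symm v).isLt; omega
  | succ d ih =>
    intro v k h1 h2
    match k with
    | 0 =>
      have hemp : (Finset.univ.filter (fun w => ltP G σ v w)) = ∅ := by
        apply Finset.eq_empty_of_forall_notMem
        intro w hw
        have hlt : σ.symm v < σ.symm w := (Finset.mem_filter.mp hw).2.1
        rw [Fin.lt_def] at hlt
        have := (σ.symm w).isLt
        omega
      rw [hF_succ, hemp, hF_zero]
      simp
    | k + 1 =>
      rw [hF_succ G σ (k+1), hF_succ G σ k]
      apply Finset.sup_congr rfl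
      intro w hw
      have hlt : σ.symm v < σ.symm w := (Finset.mem_filter.mp hw).2.1
      rw [Fin.lt_def] at hlt
      have hwn := (σ.symm w).isLt
      rw [ih w k (by omega) (by omega)]

/-- Height of a vertex in the order `ltP`. -/
def height (v : V) : ℕ := hF G σ n v

lemma height_eq (v : V) : height G σ v =
    (Finset.univ.filter (fun w => ltP G σ v w)).sup (fun w => height G σ w + 1) := by
  have h := hF_stab G σ n v n (by omega) (by omega)
  rw [height, ← h, hF_succ]
  rfl

lemma lt_height {v w : V} (h : ltP G σ v w) : height G σ w < height G σ v := by
  have hm : w ∈ Finset.univ.filter (fun w => ltP G σ v w) :=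
    Finset.mem_filter.mpr ⟨Finset.mem_univ _, h⟩
  have h2 : height G σ w + 1 ≤ height G σ v := by
    rw [height_eq G σ v]; exact Finset.le_sup (f := fun w => height G σ w + 1) hm
  omega

lemma exists_succ {v : V} {m : ℕ} (h : height G σ v = m + 1) :
    ∃ w, ltP G σ v w ∧ height G σ w = m := by
  rw [height_eq] at h
  have hne : (Finset.univ.filter (fun w => ltP G σ v w)).Nonempty := by
    by_contra hc
    rw [Finset.not_nonempty_iff_eq_empty] at hc
    rw [hc] at h
    simp at h
  obtain ⟨w, hw, hsup⟩ := Finset.exists_mem_eq_sup _ hne (fun w => height G σ w + 1)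
  rw [hsup] at h
  exact ⟨w, (Finset.mem_filter.mp hw).2, by omega⟩

lemma chain_le : ∀ (l : List V) (v : V), List.Chain (ltP G σ) v l →
    l.length ≤ height G σ v := by
  intro l
  induction l with
  | nil => simp
  | cons w t ih =>
    intro v hc
    rw [List.Chain, List.chain_cons] at hc
    have h1 := lt_height G σ hc.1
    have h2 := ih w hc.2
    simp only [List.length_cons]
    omega

lemma exists_chain : ∀ (m : ℕ) (v : V), height G σ v = m →
    ∃ l : List V, List.Chain (ltP G σ) v l ∧ l.length = m := by
  intro m
  induction m with
  | zero => intro v _; exact ⟨[], List.Chain.nil, rfl⟩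
  | succ m ih =>
    intro v h
    obtain ⟨w, hvw, hw⟩ := exists_succ G σ h
    obtain ⟨l, hl, hlen⟩ := ih w hw
    exact ⟨w :: l, List.chain_cons.mpr ⟨hvw, hl⟩, by simp [hlen]⟩

lemma exists_height : ∀ (k i : ℕ) (v : V), height G σ v = i + k →
    ∃ u : V, height G σ u = i := by
  intro k
  induction k with
  | zero => intro i v h; exact ⟨v, h⟩
  | succ k ih =>
    intro i v h
    obtain ⟨w, _, hw⟩ := exists_succ G σ (show height G σ v = (i + k) + 1 by omega)
    exact ih i w hw

lemma hashAt_eq (i : ℕ) (v : V) (hv : i ≤ height G σ v) :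
    hashAt G σ (Finset.univ.filter (fun u => i ≤ height G σ u)) v =
      (Finset.univ.filter (fun w => ltP G σ v w ∧ i ≤ height G σ w)).card +
      (Finset.univ.filter (fun w => ¬ i ≤ height G σ w)).card := by
  classical
  set U : Finset V := Finset.univ.filter (fun u => i ≤ height G σ u) with hU
  set s : Finset V := Finset.univ.filter (fun w => ¬ i ≤ height G σ w) with hs
  -- split hashStar set by membership in U
  have hA : hashStar G σ v =
      (Finset.univ.filter (fun w => ltP G σ v w ∧ i ≤ height G σ w)).card +
      (Finset.univ.filter (fun w => ltP G σ v w ∧ ¬ i ≤ height G σ w)).card := by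
    rw [hashStar]
    have h1 : (Finset.univ.filter (fun w => ¬ G.Adj v w ∧ σ.symm v < σ.symm w)) =
        Finset.univ.filter (fun w => ltP G σ v w) := by
      apply Finset.filter_congr
      intro w _
      unfold ltP
      tauto
    rw [h1]
    rw [← Finset.card_filter_add_card_filter_not
      (p := fun w => i ≤ height G σ w) (s := Finset.univ.filter (fun w => ltP G σ v w))]
    rw [Finset.filter_filter, Finset.filter_filter]
  -- the second summand of hashAt
  have hB : (Finset.univ.filter (fun z => z ∉ U ∧ G.Adj v z)).card =
      (s.filter (fun z => G.Adj v z)).card := by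
    congr 1
    ext z
    simp [hU, hs, Finset.mem_filter]
  -- the "outside" part of hashStar
  have hC : (Finset.univ.filter (fun w => ltP G σ v w ∧ ¬ i ≤ height G σ w)) =
      s.filter (fun w => ¬ G.Adj v w) := by
    ext w
    simp only [hs, Finset.mem_filter, Finset.mem_univ, true_and]
    constructor
    · rintro ⟨hlt, hh⟩
      exact ⟨hh, hlt.2⟩
    · rintro ⟨hh, hna⟩
      refine ⟨⟨?_, hna⟩, hh⟩
      -- must have σ.symm v < σ.symm w
      rcases lt_trichotomy (σ.symm v) (σ.symm w) with h | h | h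
      · exact h
      · exfalso
        have : v = w := by
          have := congrArg σ h
          simpa using this
        subst this
        exact hh hv
      · exfalso
        have hna' : ¬ G.Adj w v := fun ha => hna ha.symm
        have := lt_height G σ (show ltP G σ w v from ⟨h, hna'⟩)
        omega
  have hsplit : (s.filter (fun w => ¬ G.Adj v w)).card +
      (s.filter (fun z => G.Adj v z)).card = s.card := by
    have := Finset.card_filter_add_card_filter_not
      (p := fun z => G.Adj v z) (s := s)
    omega
  rw [hashAt, hA, hB, hC]
  omega

lemma Pclass_eq (i : ℕ) :
    Pclass G σ (Finset.univ.filter (fun u => i ≤ height G σ u)) =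
      Finset.univ.filter (fun u => height G σ u = i) := by
  classical
  ext v
  simp only [Pclass, Finset.mem_filter, Finset.mem_univ, true_and]
  constructor
  · rintro ⟨hv, hmin⟩
    by_contra hne
    have hgt : i + 1 ≤ height G σ v := by omega
    obtain ⟨u, hu⟩ := exists_height G σ (height G σ v - i) i v (by omega)
    have hle := hmin u (by omega)
    rw [hashAt_eq G σ i v hv, hashAt_eq G σ i u (by omega)] at hle
    -- the first summand for u is 0
    have h0 : (Finset.univ.filter (fun w => ltP G σ u w ∧ i ≤ height G σ w)) = ∅ := by
      apply Finset.eq_empty_of_forall_notMem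
      intro w hw
      obtain ⟨-, hlt, hh⟩ := Finset.mem_filter.mp hw
      have := lt_height G σ hlt
      omega
    -- the first summand for v is positive
    obtain ⟨l, hl, hlen⟩ := exists_chain G σ (height G σ v) v rfl
    match l, hl, hlen with
    | [], _, hlen => simp at hlen; omega
    | w :: t, hl, hlen =>
      rw [List.Chain, List.chain_cons] at hl
      have hwt : t.length ≤ height G σ w := chain_le G σ t w hl.2
      have hiw : i ≤ height G σ w := by
        simp only [List.length_cons] at hlen; omega
      have hmem : w ∈ Finset.univ.filter (fun w => ltP G σ v w ∧ i ≤ height G σ w) :=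
        Finset.mem_filter.mpr ⟨Finset.mem_univ _, hl.1, hiw⟩
      have hpos := Finset.card_pos.mpr ⟨w, hmem⟩
      rw [h0, Finset.card_empty] at hle
      omega
  · intro hv
    refine ⟨le_of_eq hv.symm, ?_⟩
    intro u hu
    have hiu : i ≤ height G σ u := hu
    rw [hashAt_eq G σ i v (le_of_eq hv.symm), hashAt_eq G σ i u hiu]
    have h0 : (Finset.univ.filter (fun w => ltP G σ v w ∧ i ≤ height G σ w)) = ∅ := by
      apply Finset.eq_empty_of_forall_notMem
      intro w hw
      obtain ⟨-, hlt, hh⟩ := Finset.mem_filter.mp hw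
      have := lt_height G σ hlt
      omega
    rw [h0]
    simp

lemma Uset_eq : ∀ i : ℕ, Uset G σ i = Finset.univ.filter (fun u => i ≤ height G σ u)
  | 0 => by simp [Uset]
  | i + 1 => by
    rw [Uset, Uset_eq i, Pclass_eq]
    ext v
    simp only [Finset.mem_sdiff, Finset.mem_filter, Finset.mem_univ, true_and]
    omega

end Aux

/-- For every valid step of the construction (i.e. while the unvisited set is still
nonempty, which is exactly the condition `1 ≤ i+1 ≤ p`), a vertex `v` belongs to the
class `P_{i+1} = Pclass G σ (Uset G σ i)` if and only if the maximum length of a chain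
`v <_P x₁ <_P ⋯ <_P x_k` starting at `v` equals `i` (one less than the 1-indexed class
index `i+1`). -/
theorem mem_Pclass_iff_height {V : Type*} [Fintype V] [DecidableEq V]
    (G : SimpleGraph V) [DecidableRel G.Adj] {n : ℕ} (σ : Fin n ≃ V)
    (hσ : UmbrellaFree G σ) (i : ℕ) (hne : (Uset G σ i).Nonempty) (v : V) :
    v ∈ Pclass G σ (Uset G σ i) ↔
      ((∃ l : List V, List.Chain (ltP G σ) v l ∧ l.length = i) ∧
        ∀ l : List V, List.Chain (ltP G σ) v l → l.length ≤ i) := by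
  rw [Uset_eq, Pclass_eq]
  simp only [Finset.mem_filter, Finset.mem_univ, true_and]
  constructor
  · intro h
    refine ⟨exists_chain G σ i v h, fun l hl => ?_⟩
    have := chain_le G σ l v hl
    omega
  · rintro ⟨⟨l, hl, hlen⟩, hub⟩
    have h1 : i ≤ height G σ v := by
      have := chain_le G σ l v hl
      omega
    obtain ⟨l', hl', hlen'⟩ := exists_chain G σ (height G σ v) v rfl
    have := hub l' hl'
    omega
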